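/- For all d₁, d₂ ≥ 1, the tensor rank of W_{d₁} ⊗ W_{d₂} as an element of (ℂ²)^{⊗(d₁+d₂)} is at least d₁ + d₂ − 1. -/
import Mathlib


open scoped TensorProduct
open PiTensorProduct

/-- Tensor rank of an element of `(ℂ²)^{⊗ι}`: the minimal number of decomposable
tensors summing to it. -/
noncomputable def tRank {ι : Type*} (T : ⨂[ℂ] (_ : ι), (ℂ × ℂ)) : ℕ :=
  sInf {r : ℕ | ∃ v : Fin r → ι → ℂ × ℂ, T = ∑ a : Fin r, tprod ℂ (v a)}

/-- `W_{d₁} ⊗ W_{d₂}` as an element of `(ℂ²)^{⊗(d₁+d₂)}`, with the tensor factors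
indexed by `Fin d₁ ⊕ Fin d₂` and `x = (1,0)`, `y = (0,1)`. -/
noncomputable def WtensorW (d₁ d₂ : ℕ) : ⨂[ℂ] (_ : Fin d₁ ⊕ Fin d₂), (ℂ × ℂ) :=
  ∑ p : Fin d₁ × Fin d₂, tprod ℂ (fun i =>
    Sum.elim (fun a => if a = p.1 then ((0, 1) : ℂ × ℂ) else (1, 0))
      (fun b => if b = p.2 then ((0, 1) : ℂ × ℂ) else (1, 0)) i)


open scoped TensorProduct
open PiTensorProduct

namespace WProof

noncomputable section

abbrev V : Type := ℂ × ℂ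
def xv : V := (1, 0)
def yv : V := (0, 1)
def fX : V →ₗ[ℂ] ℂ := LinearMap.fst ℂ ℂ ℂ
def fY : V →ₗ[ℂ] ℂ := LinearMap.snd ℂ ℂ ℂ

@[simp] lemma fX_xv : fX xv = 1 := rfl
@[simp] lemma fX_yv : fX yv = 0 := rfl
@[simp] lemma fY_xv : fY xv = 0 := rfl
@[simp] lemma fY_yv : fY yv = 1 := rfl

def wrd (n : ℕ) (P : ℕ → Prop) [DecidablePred P] : Fin n → V :=
  fun i => if P i.val then yv else xv

lemma wrd_congr {n : ℕ} {P Q : ℕ → Prop} [DecidablePred P] [DecidablePred Q]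
    (h : ∀ t, P t ↔ Q t) : wrd n P = wrd n Q := by
  funext i; exact if_congr (h i.val) rfl rfl

lemma wrd_tail {n : ℕ} (P : ℕ → Prop) [DecidablePred P] :
    Fin.tail (wrd (n + 1) P) = wrd n (fun t => P (t + 1)) := by
  funext i
  simp [Fin.tail, wrd, Fin.val_succ]

lemma wrd_zero {n : ℕ} (P : ℕ → Prop) [DecidablePred P] :
    wrd (n + 1) P 0 = if P 0 then yv else xv := rfl

def lam {n : ℕ} (g : Fin n → (V →ₗ[ℂ] ℂ)) : (⨂[ℂ] (_ : Fin n), V) →ₗ[ℂ] ℂ :=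
  PiTensorProduct.lift ((MultilinearMap.mkPiAlgebra ℂ (Fin n) ℂ).compLinearMap g)

@[simp] lemma lam_tprod {n : ℕ} (g : Fin n → (V →ₗ[ℂ] ℂ)) (v : Fin n → V) :
    lam g (tprod ℂ v) = ∏ i, g i (v i) := by
  simp [lam, MultilinearMap.compLinearMap_apply]

def ctr {n : ℕ} (f : V →ₗ[ℂ] ℂ) :
    (⨂[ℂ] (_ : Fin (n + 1)), V) →ₗ[ℂ] (⨂[ℂ] (_ : Fin n), V) :=
  PiTensorProduct.lift
    ((f.smulRight (tprod ℂ : MultilinearMap ℂ (fun _ : Fin n => V) _)).uncurryLeft)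

@[simp] lemma ctr_tprod {n : ℕ} (f : V →ₗ[ℂ] ℂ) (v : Fin (n + 1) → V) :
    ctr f (tprod ℂ v) = f (v 0) • tprod ℂ (Fin.tail v) := by
  simp [ctr, LinearMap.uncurryLeft_apply]

def gj (n j : ℕ) : Fin n → (V →ₗ[ℂ] ℂ) := fun i => if i.val = j then fY else fX

lemma lam_single {n q j : ℕ} (hq : q < n) :
    lam (gj n j) (tprod ℂ (wrd n (fun t => t = q))) = if j = q then 1 else 0 := by
  rw [lam_tprod]
  by_cases h : j = q
  · subst h
    rw [if_pos rfl]
    apply Finset.prod_eq_one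
    intro i _
    by_cases hij : i.val = j <;> simp [gj, wrd, hij, fX, fY, xv, yv]
  · rw [if_neg h]
    apply Finset.prod_eq_zero (Finset.mem_univ (⟨q, hq⟩ : Fin n))
    simp [gj, wrd, Ne.symm h, fX, xv, yv]

lemma lam_empty_gj {n j : ℕ} (hj : j < n) :
    lam (gj n j) (tprod ℂ (wrd n (fun _ => False))) = 0 := by
  rw [lam_tprod]
  apply Finset.prod_eq_zero (Finset.mem_univ (⟨j, hj⟩ : Fin n))
  simp [gj, wrd, fY, xv]

lemma lam_empty_fX {n : ℕ} :
    lam (fun _ : Fin n => fX) (tprod ℂ (wrd n (fun _ => False))) = 1 := by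
  rw [lam_tprod]
  apply Finset.prod_eq_one
  intro i _
  simp [wrd, fX, xv]

/-! ### The tensors -/

/-- `W_n + e·x^{⊗n}` -/
def WA (n : ℕ) (e : ℂ) : ⨂[ℂ] (_ : Fin n), V :=
  (∑ p ∈ Finset.range n, tprod ℂ (wrd n (fun t => t = p)))
    + e • tprod ℂ (wrd n (fun _ => False))

/-- the "y-slice" tensor -/
def U (n k : ℕ) (e : ℂ) : ⨂[ℂ] (_ : Fin n), V :=
  (∑ j ∈ Finset.range (n - k), tprod ℂ (wrd n (fun t => t = k + j)))
    + e • tprod ℂ (wrd n (fun _ => False))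

/-- `(W_k + c x^k) ⊗ (W_{n-k} + e x^{n-k})`, flattened into `Fin n` -/
def TT (n k : ℕ) (c e : ℂ) : ⨂[ℂ] (_ : Fin n), V :=
  (∑ p ∈ Finset.range k, ∑ j ∈ Finset.range (n - k),
      tprod ℂ (wrd n (fun t => t = p ∨ t = k + j)))
    + e • (∑ p ∈ Finset.range k, tprod ℂ (wrd n (fun t => t = p)))
    + c • U n k e

end

end WProof

namespace WProof
noncomputable section

lemma wrd_zero_pos {n : ℕ} {P : ℕ → Prop} [DecidablePred P] (h : P 0) :
    wrd (n + 1) P 0 = yv := if_pos h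

lemma wrd_zero_neg {n : ℕ} {P : ℕ → Prop} [DecidablePred P] (h : ¬ P 0) :
    wrd (n + 1) P 0 = xv := if_neg h

end
end WProof

namespace WProof

noncomputable section
section
variable (m k : ℕ) (c e : ℂ)


lemma ctr_fX_TT : ctr fX (TT (m + 1) (k + 1) c e) = TT m k c e := by
  have hD : ∀ p j : ℕ, Fin.tail (wrd (m+1) (fun t => t = p + 1 ∨ t = (k+1) + j))
      = wrd m (fun t => t = p ∨ t = k + j) := fun p j => by
    rw [wrd_tail]
    exact wrd_congr fun t =>
      or_congr ⟨fun h => by omega, fun h => by omega⟩ ⟨fun h => by omega, fun h => by omega⟩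
  have hcD : ∀ p j : ℕ, wrd (m+1) (fun t => t = p + 1 ∨ t = (k+1) + j) 0 = xv :=
    fun p j => wrd_zero_neg (by rintro (h | h) <;> omega)
  have hcD0 : ∀ j : ℕ, wrd (m+1) (fun t => t = 0 ∨ t = (k+1) + j) 0 = yv :=
    fun j => wrd_zero_pos (Or.inl rfl)
  have h1 : ∀ p : ℕ, Fin.tail (wrd (m+1) (fun t => t = p + 1)) = wrd m (fun t => t = p) := by
    intro p; rw [wrd_tail]; exact wrd_congr (fun t => by constructor <;> intro h <;> omega)
  have hc1 : ∀ p : ℕ, wrd (m+1) (fun t => t = p + 1) 0 = xv :=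
    fun p => wrd_zero_neg (by omega)
  have hc10 : wrd (m+1) (fun t => t = 0) 0 = yv := wrd_zero_pos rfl
  have hU : ∀ j : ℕ, Fin.tail (wrd (m+1) (fun t => t = (k+1) + j)) = wrd m (fun t => t = k + j) := by
    intro j; rw [wrd_tail]; exact wrd_congr (fun t => by constructor <;> intro h <;> omega)
  have hcU : ∀ j : ℕ, wrd (m+1) (fun t => t = (k+1) + j) 0 = xv :=
    fun j => wrd_zero_neg (by omega)
  have hc0 : wrd (m+1) (fun _ : ℕ => False) 0 = xv := wrd_zero_neg (by simp)
  have ht0 : Fin.tail (wrd (m+1) (fun _ : ℕ => False)) = wrd m (fun _ => False) := by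
    rw [wrd_tail]
  simp only [TT, U, map_add, map_smul, map_sum, Nat.succ_sub_succ, Finset.sum_range_succ',
    ctr_tprod, hD, hcD, hcD0, h1, hc1, hc10, hU, hcU, hc0, ht0,
    fX_xv, fX_yv, fY_xv, fY_yv, one_smul, zero_smul, smul_zero,
    Finset.sum_const_zero, add_zero, zero_add]

lemma ctr_fY_TT : ctr fY (TT (m + 1) (k + 1) c e) = U m k e := by
  have hD0 : ∀ j : ℕ, Fin.tail (wrd (m+1) (fun t => t = 0 ∨ t = (k+1) + j))
      = wrd m (fun t => t = k + j) := fun j => by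
    rw [wrd_tail]
    refine wrd_congr (fun t => ⟨fun h => ?_, fun h => Or.inr (by omega)⟩)
    rcases h with h | h <;> omega
  have hcD : ∀ p j : ℕ, wrd (m+1) (fun t => t = p + 1 ∨ t = (k+1) + j) 0 = xv :=
    fun p j => wrd_zero_neg (by rintro (h | h) <;> omega)
  have hcD0 : ∀ j : ℕ, wrd (m+1) (fun t => t = 0 ∨ t = (k+1) + j) 0 = yv :=
    fun j => wrd_zero_pos (Or.inl rfl)
  have h0 : Fin.tail (wrd (m+1) (fun t => t = 0)) = wrd m (fun _ => False) := by
    rw [wrd_tail]; exact wrd_congr (fun t => by simp)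
  have hc1 : ∀ p : ℕ, wrd (m+1) (fun t => t = p + 1) 0 = xv :=
    fun p => wrd_zero_neg (by omega)
  have hc10 : wrd (m+1) (fun t => t = 0) 0 = yv := wrd_zero_pos rfl
  have hcU : ∀ j : ℕ, wrd (m+1) (fun t => t = (k+1) + j) 0 = xv :=
    fun j => wrd_zero_neg (by omega)
  have hc0 : wrd (m+1) (fun _ : ℕ => False) 0 = xv := wrd_zero_neg (by simp)
  simp only [TT, U, map_add, map_smul, map_sum, Nat.succ_sub_succ, Finset.sum_range_succ',
    ctr_tprod, hD0, hcD, hcD0, h0, hc1, hc10, hcU, hc0,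
    fX_xv, fX_yv, fY_xv, fY_yv, one_smul, zero_smul, smul_zero,
    Finset.sum_const_zero, add_zero, zero_add]

end
end

end WProof

namespace WProof

noncomputable section

lemma smul_tprod {n : ℕ} (c : ℂ) (w : Fin (n + 1) → V) :
    c • tprod ℂ w = tprod ℂ (Function.update w 0 (c • w 0)) := by
  have := (tprod ℂ (s := fun _ : Fin (n+1) => V)).map_update_smul w 0 c (w 0)
  rw [Function.update_eq_self] at this
  exact this.symm

lemma WA_sub (n : ℕ) (e γ : ℂ) :
    WA n e - γ • tprod ℂ (wrd n (fun _ => False)) = WA n (e - γ) := by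
  rw [WA, WA]; module

lemma TT_sub (n k : ℕ) (c e γ : ℂ) :
    TT n k c e - γ • U n k e = TT n k (c - γ) e := by
  rw [TT, TT]; module

lemma lam_U {n k : ℕ} (e : ℂ) (hk : k < n) : lam (gj n k) (U n k e) = 1 := by
  rw [U, map_add, map_smul, map_sum]
  have hterm : ∀ j ∈ Finset.range (n - k),
      lam (gj n k) (tprod ℂ (wrd n (fun t => t = k + j))) = if j = 0 then (1:ℂ) else 0 := by
    intro j hj
    rw [Finset.mem_range] at hj
    rw [lam_single (by omega)]
    exact if_congr (by constructor <;> intro h <;> omega) rfl rfl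
  rw [Finset.sum_congr rfl hterm, Finset.sum_ite_eq' (Finset.range (n - k)) 0 (fun _ => (1:ℂ))]
  rw [if_pos (Finset.mem_range.mpr (by omega)), lam_empty_gj hk]
  simp

end

end WProof

namespace WProof

noncomputable section

lemma ctr_fX_WA (m : ℕ) (e : ℂ) : ctr fX (WA (m + 1) e) = WA m e := by
  rw [WA, map_add, map_smul, map_sum, Finset.sum_range_succ']
  have h1 : ∀ p : ℕ, Fin.tail (wrd (m+1) (fun t => t = p + 1)) = wrd m (fun t => t = p) := by
    intro p; rw [wrd_tail]; exact wrd_congr (fun t => by constructor <;> intro h <;> omega)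
  simp only [ctr_tprod, h1, wrd_zero, wrd_tail]
  simp [WA, wrd_zero, fX, xv, yv]

lemma ctr_fY_WA (m : ℕ) (e : ℂ) :
    ctr fY (WA (m + 1) e) = tprod ℂ (wrd m (fun _ => False)) := by
  rw [WA, map_add, map_smul, map_sum, Finset.sum_range_succ']
  have h1 : ∀ p : ℕ, Fin.tail (wrd (m+1) (fun t => t = p + 1)) = wrd m (fun t => t = p) := by
    intro p; rw [wrd_tail]; exact wrd_congr (fun t => by constructor <;> intro h <;> omega)
  have h0 : Fin.tail (wrd (m+1) (fun t => t = 0)) = wrd m (fun _ => False) := by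
    rw [wrd_tail]; exact wrd_congr (fun t => by simp)
  simp only [ctr_tprod, h1, h0, wrd_zero, wrd_tail]
  simp [fY, xv, yv]

end

end WProof

namespace WProof

noncomputable section

lemma lemA : ∀ (m : ℕ) (e : ℂ) (r : ℕ) (v : Fin r → Fin (m + 1) → V),
    WA (m + 1) e = ∑ a : Fin r, tprod ℂ (v a) → m + 1 ≤ r := by
  intro m
  induction m with
  | zero =>
    intro e r v h
    by_contra hr
    push_neg at hr
    have hr0 : r = 0 := by omega
    subst hr0
    have := congrArg (lam (gj 1 0)) h
    rw [WA, map_add, map_smul, map_sum] at this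
    simp only [Finset.univ_eq_empty, Finset.sum_empty, map_zero] at this
    rw [Finset.sum_range_one, lam_single (by omega), lam_empty_gj (by omega)] at this
    simp at this
  | succ m ih =>
    intro e r v h
    have hy : tprod ℂ (wrd (m + 1) (fun _ => False))
        = ∑ a : Fin r, fY (v a 0) • tprod ℂ (Fin.tail (v a)) := by
      rw [← ctr_fY_WA, h, map_sum]
      simp only [ctr_tprod]
    have ex : ∃ a₀, fY (v a₀ 0) ≠ 0 := by
      by_contra hall
      push_neg at hall
      simp only [hall, zero_smul, Finset.sum_const_zero] at hy
      have := congrArg (lam (fun _ : Fin (m+1) => fX)) hy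
      rw [lam_empty_fX, map_zero] at this
      exact one_ne_zero this
    obtain ⟨a₀, ha₀⟩ := ex
    obtain ⟨r', rfl⟩ : ∃ r', r = r' + 1 := ⟨r - 1, by have := a₀.pos; omega⟩
    set γ : ℂ := fX (v a₀ 0) / fY (v a₀ 0) with hγ
    have hx : WA (m + 1) e = ∑ a : Fin (r' + 1), fX (v a 0) • tprod ℂ (Fin.tail (v a)) := by
      rw [← ctr_fX_WA (m + 1) e, h, map_sum]
      simp only [ctr_tprod]
    have key : WA (m + 1) (e - γ)
        = ∑ a : Fin (r' + 1), (fX (v a 0) - γ * fY (v a 0)) • tprod ℂ (Fin.tail (v a)) := by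
      rw [← WA_sub, hx, hy, Finset.smul_sum, ← Finset.sum_sub_distrib]
      congr 1
      funext a
      module
    have hca0 : fX (v a₀ 0) - γ * fY (v a₀ 0) = 0 := by
      rw [hγ, div_mul_cancel₀ _ ha₀, sub_self]
    rw [Fin.sum_univ_succAbove _ a₀, hca0, zero_smul, zero_add] at key
    have key2 : WA (m + 1) (e - γ) = ∑ b : Fin r', tprod ℂ
        (Function.update (Fin.tail (v (a₀.succAbove b))) 0
          ((fX (v (a₀.succAbove b) 0) - γ * fY (v (a₀.succAbove b) 0))
            • Fin.tail (v (a₀.succAbove b)) 0)) := by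
      rw [key]
      exact Finset.sum_congr rfl fun b _ => smul_tprod _ _
    have := ih (e - γ) r' _ key2
    omega

end

end WProof

namespace WProof
noncomputable section
lemma U_zero (n : ℕ) (e : ℂ) : U n 0 e = WA n e := by
  rw [U, WA]
  congr 1
  refine Finset.sum_congr (by simp) (fun j _ => ?_)
  exact congrArg _ (wrd_congr (fun t => by constructor <;> intro h <;> omega))
end
end WProof

namespace WProof

noncomputable section

lemma lemB : ∀ (k n : ℕ) (c e : ℂ) (r : ℕ) (v : Fin r → Fin n → V),
    k + 1 < n → TT n (k + 1) c e = ∑ a : Fin r, tprod ℂ (v a) → n - 1 ≤ r := by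
  intro k
  induction k with
  | zero =>
    intro n c e r v hn h
    obtain ⟨m, rfl⟩ : ∃ m, n = m + 1 := ⟨n - 1, by omega⟩
    obtain ⟨m', rfl⟩ : ∃ m', m = m' + 1 := ⟨m - 1, by omega⟩
    have hy : WA (m' + 1) e = ∑ a : Fin r, fY (v a 0) • tprod ℂ (Fin.tail (v a)) := by
      rw [← U_zero, ← ctr_fY_TT, h, map_sum]
      simp only [ctr_tprod]
    have hy2 : WA (m' + 1) e = ∑ a : Fin r, tprod ℂ
        (Function.update (Fin.tail (v a)) 0 (fY (v a 0) • Fin.tail (v a) 0)) := by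
      rw [hy]
      exact Finset.sum_congr rfl fun a _ => smul_tprod _ _
    have := lemA m' e r _ hy2
    omega
  | succ k ih =>
    intro n c e r v hn h
    obtain ⟨m, rfl⟩ : ∃ m, n = m + 1 := ⟨n - 1, by omega⟩
    have hy : U m (k + 1) e = ∑ a : Fin r, fY (v a 0) • tprod ℂ (Fin.tail (v a)) := by
      rw [← ctr_fY_TT m (k + 1) c e, h, map_sum]
      simp only [ctr_tprod]
    have ex : ∃ a₀, fY (v a₀ 0) ≠ 0 := by
      by_contra hall
      push_neg at hall
      simp only [hall, zero_smul, Finset.sum_const_zero] at hy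
      have := congrArg (lam (gj m (k + 1))) hy
      rw [lam_U e (by omega), map_zero] at this
      exact one_ne_zero this
    obtain ⟨a₀, ha₀⟩ := ex
    obtain ⟨r', rfl⟩ : ∃ r', r = r' + 1 := ⟨r - 1, by have := a₀.pos; omega⟩
    set γ : ℂ := fX (v a₀ 0) / fY (v a₀ 0) with hγ
    have hx : TT m (k + 1) c e
        = ∑ a : Fin (r' + 1), fX (v a 0) • tprod ℂ (Fin.tail (v a)) := by
      rw [← ctr_fX_TT m (k + 1) c e, h, map_sum]
      simp only [ctr_tprod]
    have key : TT m (k + 1) (c - γ) e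
        = ∑ a : Fin (r' + 1), (fX (v a 0) - γ * fY (v a 0)) • tprod ℂ (Fin.tail (v a)) := by
      rw [← TT_sub, hx, hy, Finset.smul_sum, ← Finset.sum_sub_distrib]
      congr 1
      funext a
      module
    have hca0 : fX (v a₀ 0) - γ * fY (v a₀ 0) = 0 := by
      rw [hγ, div_mul_cancel₀ _ ha₀, sub_self]
    rw [Fin.sum_univ_succAbove _ a₀, hca0, zero_smul, zero_add] at key
    obtain ⟨m', rfl⟩ : ∃ m', m = m' + 1 := ⟨m - 1, by omega⟩
    have key2 : TT (m' + 1) (k + 1) (c - γ) e = ∑ b : Fin r', tprod ℂ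
        (Function.update (Fin.tail (v (a₀.succAbove b))) 0
          ((fX (v (a₀.succAbove b) 0) - γ * fY (v (a₀.succAbove b) 0))
            • Fin.tail (v (a₀.succAbove b)) 0)) := by
      rw [key]
      exact Finset.sum_congr rfl fun b _ => smul_tprod _ _
    have := ih (m' + 1) (c - γ) e r' _ (by omega) key2
    omega

end

end WProof


namespace WProof
noncomputable section

lemma word_eq (d₁ d₂ : ℕ) (p : Fin d₁) (q : Fin d₂) :
    (fun i : Fin (d₁ + d₂) =>
      (fun i : Fin d₁ ⊕ Fin d₂ => Sum.elim
        (fun a => if a = p then ((0, 1) : ℂ × ℂ) else (1, 0))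
        (fun b => if b = q then ((0, 1) : ℂ × ℂ) else (1, 0)) i) (finSumFinEquiv.symm i))
    = wrd (d₁ + d₂) (fun t => t = p.val ∨ t = d₁ + q.val) := by
  funext i
  refine Fin.addCases (fun i₁ => ?_) (fun i₂ => ?_) i
  · simp only [finSumFinEquiv_symm_apply_castAdd, Sum.elim_inl, wrd, Fin.coe_castAdd]
    refine if_congr ?_ rfl rfl
    have hi := i₁.isLt
    have hq := q.isLt
    constructor
    · intro h; exact Or.inl (congrArg Fin.val h)
    · rintro (h | h)
      · exact Fin.ext h
      · exfalso; omega
  · simp only [finSumFinEquiv_symm_apply_natAdd, Sum.elim_inr, wrd, Fin.coe_natAdd]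
    refine if_congr ?_ rfl rfl
    have hp := p.isLt
    have hi := i₂.isLt
    constructor
    · intro h; exact Or.inr (congrArg (d₁ + ·) (congrArg Fin.val h))
    · rintro (h | h)
      · exfalso; omega
      · exact Fin.ext (by omega)

lemma reindexW (d₁ d₂ : ℕ) :
    PiTensorProduct.reindex ℂ (fun _ : Fin d₁ ⊕ Fin d₂ => V) finSumFinEquiv (WtensorW d₁ d₂)
      = TT (d₁ + d₂) d₁ 0 0 := by
  rw [WtensorW, map_sum]
  have hterm : ∀ x : Fin d₁ × Fin d₂,
      PiTensorProduct.reindex ℂ (fun _ : Fin d₁ ⊕ Fin d₂ => V) finSumFinEquiv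
        (tprod ℂ (fun i => Sum.elim
          (fun a => if a = x.1 then ((0, 1) : ℂ × ℂ) else (1, 0))
          (fun b => if b = x.2 then ((0, 1) : ℂ × ℂ) else (1, 0)) i))
      = tprod ℂ (wrd (d₁ + d₂) (fun t => t = x.1.val ∨ t = d₁ + x.2.val)) := by
    intro x
    rw [PiTensorProduct.reindex_tprod]
    exact congrArg _ (word_eq d₁ d₂ x.1 x.2)
  rw [Finset.sum_congr rfl (fun x _ => hterm x)]
  rw [TT, U]
  simp only [zero_smul, smul_zero, zero_add, add_zero, mul_zero, zero_mul, Nat.add_sub_cancel_left,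
    Fintype.sum_prod_type]
  rw [← Fin.sum_univ_eq_sum_range (fun a => ∑ j ∈ Finset.range d₂,
      tprod ℂ (wrd (d₁ + d₂) (fun t => t = a ∨ t = d₁ + j)))]
  refine Finset.sum_congr rfl (fun p _ => ?_)
  rw [← Fin.sum_univ_eq_sum_range (fun j =>
      tprod ℂ (wrd (d₁ + d₂) (fun t => t = p.val ∨ t = d₁ + j)))]

end
end WProof



theorem stmt15 (d₁ d₂ : ℕ) (h₁ : 1 ≤ d₁) (h₂ : 1 ≤ d₂) :
    d₁ + d₂ - 1 ≤ tRank (WtensorW d₁ d₂) := by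
  classical
  refine le_csInf ⟨d₁ * d₂, ?_⟩ (fun r hr => ?_)
  · refine ⟨fun a => (fun i => Sum.elim
      (fun x => if x = (finProdFinEquiv.symm a).1 then ((0, 1) : ℂ × ℂ) else (1, 0))
      (fun b => if b = (finProdFinEquiv.symm a).2 then ((0, 1) : ℂ × ℂ) else (1, 0)) i), ?_⟩
    rw [WtensorW]
    exact (Equiv.sum_comp finProdFinEquiv.symm _).symm
  · obtain ⟨v, h⟩ := hr
    obtain ⟨k, rfl⟩ : ∃ k, d₁ = k + 1 := ⟨d₁ - 1, by omega⟩
    have h2 := congrArg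
      (PiTensorProduct.reindex ℂ (fun _ : Fin (k+1) ⊕ Fin d₂ => WProof.V) finSumFinEquiv) h
    rw [WProof.reindexW, map_sum] at h2
    simp only [PiTensorProduct.reindex_tprod] at h2
    exact WProof.lemB k (k + 1 + d₂) 0 0 r _ (by omega) h2
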